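/- Let f_a and f_b be d-dimensional product Laplace densities, f_c(x) = ∏_{ℓ=1}^d (1/(2σ_ℓ)) exp(−|x_ℓ − μ_{cℓ}|/σ_ℓ) for c ∈ {a,b}, with common scales σ_ℓ > 0. Then the Chernoff information satisfies Chernoff(f_a, f_b) = (1/2) ∑_{ℓ=1}^d ( |μ_{aℓ} − μ_{bℓ}|/σ_ℓ − 2 log(1 + |μ_{aℓ} − μ_{bℓ}|/(2σ_ℓ)) ), with the supremum over t ∈ (0,1) in the definition of Chernoff information attained at t = 1/2. -/

import Mathlib

open MeasureTheory Real Set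

lemma exp_int_Ioi (c u : ℝ) (hc : 0 < c) : ∫ y in Ioi u, Real.exp (-(c * y)) = Real.exp (-(c*u)) / c := by
  have := integral_comp_mul_left_Ioi (fun x => Real.exp (-x)) u hc
  simp only [smul_eq_mul] at this
  rw [this, integral_exp_neg_Ioi]
  field_simp

lemma exp_int_Iic (c u : ℝ) (hc : 0 < c) : ∫ y in Iic u, Real.exp (c * y) = Real.exp (c*u) / c := by
  have h := integral_comp_neg_Ioi (-u) (fun y => Real.exp (c * y))
  simp only [neg_neg] at h
  rw [← h]
  simp only [mul_neg]
  rw [exp_int_Ioi c (-u) hc]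
  ring_nf


lemma integrable_exp_neg_mul_abs_sub (c m : ℝ) (hc : 0 < c) :
    Integrable (fun y : ℝ => Real.exp (-(c * |y - m|))) := by
  have hIoi : IntegrableOn (fun y : ℝ => Real.exp (-(c * |y - m|))) (Ioi m) := by
    have base : IntegrableOn (fun y : ℝ => Real.exp (-c * y) * Real.exp (c * m)) (Ioi m) :=
      (exp_neg_integrableOn_Ioi m hc).mul_const _
    refine base.congr_fun (fun x hx => ?_) measurableSet_Ioi
    simp only [mem_Ioi] at hx
    dsimp only
    rw [← Real.exp_add, abs_of_nonneg (by linarith)]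
    ring_nf
  have hIio : IntegrableOn (fun y : ℝ => Real.exp (-(c * |y - m|))) (Iio m) := by
    have base : IntegrableOn (fun y : ℝ => Real.exp (-c * y)) (Ioi (-m)) :=
      exp_neg_integrableOn_Ioi (-m) hc
    have negmp := (MeasurePreserving.integrableOn_comp_preimage
      (Measure.measurePreserving_neg (volume : Measure ℝ))
      (Homeomorph.neg ℝ).measurableEmbedding).2 base
    -- negmp : IntegrableOn ((fun y => exp (-c*y)) ∘ Neg.neg) (Neg.neg ⁻¹' Ioi (-m))
    have hpre : (Neg.neg ⁻¹' Ioi (-m) : Set ℝ) = Iio m := by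
      ext x; simp
    rw [hpre] at negmp
    have base2 : IntegrableOn (fun y : ℝ => Real.exp (c * y) * Real.exp (-(c * m))) (Iio m) := by
      refine (negmp.congr_fun (fun x _ => ?_) measurableSet_Iio).mul_const _
      simp [Function.comp]
    refine base2.congr_fun (fun x hx => ?_) measurableSet_Iio
    simp only [mem_Iio] at hx
    dsimp only
    rw [← Real.exp_add, abs_of_nonpos (by linarith)]
    ring_nf
  have : IntegrableOn (fun y : ℝ => Real.exp (-(c * |y - m|))) (Iio m ∪ Ici m) := by
    refine hIio.union ?_
    rwa [integrableOn_Ici_iff_integrableOn_Ioi]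
  rwa [Iio_union_Ici, integrableOn_univ] at this

lemma core_half (Δ σ : ℝ) (hΔ : 0 ≤ Δ) (hσ : 0 < σ) :
    ∫ z : ℝ, Real.exp (-((|z| + |z - Δ|) / (2*σ))) = (Δ + 2*σ) * Real.exp (-(Δ/(2*σ))) := by
  set F : ℝ → ℝ := fun z => Real.exp (-((|z| + |z - Δ|) / (2*σ))) with hF
  have hσ2 : (0:ℝ) < 2*σ := by linarith
  have hint : Integrable F := by
    have h := integrable_exp_neg_mul_abs_sub ((2*σ)⁻¹) 0 (by positivity)
    refine (h.const_mul (Real.exp (Δ/(2*σ)))).mono' ?_ ?_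
    · exact (Continuous.neg ((continuous_abs.add
        (continuous_abs.comp (continuous_id.sub continuous_const))).div_const _)).rexp.aestronglyMeasurable
    · filter_upwards with z
      rw [norm_of_nonneg (exp_pos _).le, ← Real.exp_add]
      apply Real.exp_le_exp.2
      rw [sub_zero, inv_mul_eq_div, ← sub_eq_add_neg, ← sub_div, ← neg_div,
        div_le_div_iff_of_pos_right hσ2]
      have := abs_nonneg (z - Δ); linarith
  have split1 : ∫ z, F z = (∫ z in Iic 0, F z) + ∫ z in Ioi 0, F z := by
    rw [← integral_add_compl measurableSet_Iic hint, compl_Iic]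
  have split2 : ∫ z in Ioi (0:ℝ), F z = (∫ z in Ioc 0 Δ, F z) + ∫ z in Ioi Δ, F z := by
    rw [← setIntegral_union (Ioc_disjoint_Ioi le_rfl) measurableSet_Ioi
      hint.integrableOn hint.integrableOn, Ioc_union_Ioi_eq_Ioi hΔ]
  have e1 : ∫ z in Iic (0:ℝ), F z = σ * Real.exp (-(Δ/(2*σ))) := by
    have hcong : ∀ z ∈ Iic (0:ℝ), F z = Real.exp (σ⁻¹ * z) * Real.exp (-(Δ/(2*σ))) := by
      intro z hz
      simp only [mem_Iic] at hz
      rw [hF, ← Real.exp_add]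
      dsimp only
      rw [abs_of_nonpos hz, abs_of_nonpos (by linarith)]
      congr 1
      field_simp
      ring
    rw [setIntegral_congr_fun measurableSet_Iic hcong, integral_mul_const,
      exp_int_Iic σ⁻¹ 0 (by positivity)]
    field_simp
    simp
  have e2 : ∫ z in Ioc (0:ℝ) Δ, F z = Δ * Real.exp (-(Δ/(2*σ))) := by
    have hcong : ∀ z ∈ Ioc (0:ℝ) Δ, F z = Real.exp (-(Δ/(2*σ))) := by
      intro z hz
      obtain ⟨h1, h2⟩ := hz
      rw [hF]
      dsimp only
      rw [abs_of_nonneg h1.le, abs_of_nonpos (by linarith)]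
      congr 1
      ring
    rw [setIntegral_congr_fun measurableSet_Ioc hcong, setIntegral_const, smul_eq_mul,
      measureReal_def, Real.volume_Ioc, sub_zero, ENNReal.toReal_ofReal hΔ]
  have e3 : ∫ z in Ioi Δ, F z = σ * Real.exp (-(Δ/(2*σ))) := by
    have hcong : ∀ z ∈ Ioi Δ, F z = Real.exp (-(σ⁻¹ * z)) * Real.exp (Δ/(2*σ)) := by
      intro z hz
      simp only [mem_Ioi] at hz
      rw [hF, ← Real.exp_add]
      dsimp only
      rw [abs_of_nonneg (by linarith), abs_of_nonneg (by linarith)]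
      congr 1
      field_simp
      ring
    rw [setIntegral_congr_fun measurableSet_Ioi hcong, integral_mul_const,
      exp_int_Ioi σ⁻¹ Δ (by positivity)]
    rw [div_inv_eq_mul, mul_right_comm, ← Real.exp_add,
      show -(σ⁻¹ * Δ) + Δ/(2*σ) = -(Δ/(2*σ)) by field_simp; ring]
    ring
  rw [split1, split2, e1, e2, e3]
  ring

noncomputable def glap (a b σ t y : ℝ) : ℝ :=
  Real.exp (-(t * |y - a| + (1 - t) * |y - b|) / σ)

lemma glap_pos {a b σ t y : ℝ} : 0 < glap a b σ t y := Real.exp_pos _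

lemma glap_integrable (a b : ℝ) {σ t : ℝ} (hσ : 0 < σ) (ht0 : 0 ≤ t) (ht1 : t ≤ 1) :
    Integrable (fun y => glap a b σ t y) := by
  have h := integrable_exp_neg_mul_abs_sub σ⁻¹ a (by positivity)
  refine (h.const_mul (Real.exp (|a-b|/σ))).mono' ?_ ?_
  · unfold glap
    exact (Continuous.div_const (Continuous.neg ((continuous_const.mul
      (continuous_abs.comp (continuous_id.sub continuous_const))).add
      (continuous_const.mul (continuous_abs.comp
        (continuous_id.sub continuous_const))))) σ).rexp.aestronglyMeasurable
  · filter_upwards with y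
    unfold glap
    rw [norm_of_nonneg (exp_pos _).le, ← Real.exp_add]
    apply Real.exp_le_exp.2
    rw [inv_mul_eq_div, ← sub_eq_add_neg, ← sub_div, div_le_div_iff_of_pos_right hσ]
    have h1 : |y - a| ≤ |y - b| + |a - b| := by
      have := abs_sub_le y b a
      rwa [abs_sub_comm b a] at this
    nlinarith [abs_nonneg (y - a), abs_nonneg (y - b), abs_nonneg (a - b),
      mul_nonneg (sub_nonneg.2 ht1) (abs_nonneg (a-b))]

lemma glap_reflect (a b : ℝ) (σ t : ℝ) :
    ∫ y, glap a b σ (1 - t) y = ∫ y, glap a b σ t y := by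
  have h := integral_sub_left_eq_self (fun y => glap a b σ t y) (volume : Measure ℝ) (a + b)
  rw [← h]
  congr 1
  funext y
  unfold glap
  rw [show a + b - y - a = -(y - b) by ring, show a + b - y - b = -(y - a) by ring,
    abs_neg, abs_neg]
  congr 1
  ring

lemma glap_amgm (a b σ t y : ℝ) :
    2 * glap a b σ (1/2) y ≤ glap a b σ t y + glap a b σ (1 - t) y := by
  unfold glap
  set A := |y - a|; set B := |y - b|
  set P := -(t * A + (1 - t) * B) / σ with hP
  set Q := -((1 - t) * A + (1 - (1 - t)) * B) / σ with hQ
  have hhalf : -(1/2 * A + (1 - 1/2) * B) / σ = (P + Q)/2 := by rw [hP, hQ]; ring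
  rw [hhalf]
  have e1 : Real.exp P = Real.exp (P/2) * Real.exp (P/2) := by rw [← Real.exp_add]; ring_nf
  have e2 : Real.exp Q = Real.exp (Q/2) * Real.exp (Q/2) := by rw [← Real.exp_add]; ring_nf
  have e3 : Real.exp ((P+Q)/2) = Real.exp (P/2) * Real.exp (Q/2) := by
    rw [← Real.exp_add]; ring_nf
  nlinarith [sq_nonneg (Real.exp (P/2) - Real.exp (Q/2))]

lemma glap_int_ge (a b : ℝ) {σ t : ℝ} (hσ : 0 < σ) (ht0 : 0 ≤ t) (ht1 : t ≤ 1) :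
    ∫ y, glap a b σ (1/2) y ≤ ∫ y, glap a b σ t y := by
  have i1 := glap_integrable a b hσ ht0 ht1
  have i2 := glap_integrable a b hσ (by linarith : (0:ℝ) ≤ 1 - t) (by linarith)
  have ih := glap_integrable a b hσ (by norm_num : (0:ℝ) ≤ 1/2) (by norm_num)
  have h1 : ∫ y, 2 * glap a b σ (1/2) y ≤ ∫ y, (glap a b σ t y + glap a b σ (1-t) y) :=
    integral_mono (ih.const_mul 2) (i1.add i2) (fun y => glap_amgm a b σ t y)
  rw [integral_const_mul, integral_add i1 i2, glap_reflect] at h1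
  linarith

lemma glap_half_val_of_le {a b σ : ℝ} (hσ : 0 < σ) (hab : a ≤ b) :
    ∫ y, glap a b σ (1/2) y = (|a - b| + 2*σ) * Real.exp (-(|a - b|/(2*σ))) := by
  have h := integral_sub_right_eq_self
    (fun z => Real.exp (-((|z| + |z - (b - a)|) / (2*σ)))) (μ := volume) a
  have hfe : (fun y => glap a b σ (1/2) y)
      = fun y => Real.exp (-((|y - a| + |y - a - (b - a)|) / (2*σ))) := by
    funext y
    unfold glap
    rw [show y - a - (b - a) = y - b by ring]
    congr 1
    field_simp
    ring
  rw [hfe]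
  rw [h, core_half (b - a) σ (by linarith) hσ, abs_sub_comm, abs_of_nonneg (by linarith)]

lemma glap_half_val (a b : ℝ) {σ : ℝ} (hσ : 0 < σ) :
    ∫ y, glap a b σ (1/2) y = (|a - b| + 2*σ) * Real.exp (-(|a - b|/(2*σ))) := by
  rcases le_total a b with hab | hab
  · exact glap_half_val_of_le hσ hab
  · have hsw : (fun y => glap a b σ (1/2) y) = fun y => glap b a σ (1/2) y := by
      funext y; unfold glap; congr 1; ring
    rw [hsw, glap_half_val_of_le hσ hab, abs_sub_comm]

section Assemble
variable {d : ℕ} (μa μb : Fin d → ℝ) (σ : Fin d → ℝ)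

lemma prod_form (hσ : ∀ ℓ, 0 < σ ℓ) (fa fb : (Fin d → ℝ) → ℝ)
    (hfa : ∀ x, fa x = ∏ ℓ, 1 / (2 * σ ℓ) * Real.exp (-|x ℓ - μa ℓ| / σ ℓ))
    (hfb : ∀ x, fb x = ∏ ℓ, 1 / (2 * σ ℓ) * Real.exp (-|x ℓ - μb ℓ| / σ ℓ))
    (t : ℝ) (x : Fin d → ℝ) :
    fa x ^ t * fb x ^ (1 - t)
      = ∏ ℓ, (1 / (2 * σ ℓ) * glap (μa ℓ) (μb ℓ) (σ ℓ) t (x ℓ)) := by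
  rw [hfa, hfb]
  rw [← Real.finset_prod_rpow _ _ (fun ℓ _ => (mul_pos (one_div_pos.2 (by linarith [hσ ℓ])) (Real.exp_pos _)).le) t,
    ← Real.finset_prod_rpow _ _ (fun ℓ _ => (mul_pos (one_div_pos.2 (by linarith [hσ ℓ])) (Real.exp_pos _)).le) (1 - t),
    ← Finset.prod_mul_distrib]
  refine Finset.prod_congr rfl fun ℓ _ => ?_
  have hc : (0:ℝ) < 1 / (2 * σ ℓ) := one_div_pos.2 (by linarith [hσ ℓ])
  rw [Real.mul_rpow hc.le (exp_pos _).le, Real.mul_rpow hc.le (exp_pos _).le,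
    ← Real.exp_mul, ← Real.exp_mul]
  have : (1 / (2 * σ ℓ)) ^ t * Real.exp (-|x ℓ - μa ℓ| / σ ℓ * t)
        * ((1 / (2 * σ ℓ)) ^ (1 - t) * Real.exp (-|x ℓ - μb ℓ| / σ ℓ * (1 - t)))
      = ((1 / (2 * σ ℓ)) ^ t * (1 / (2 * σ ℓ)) ^ (1 - t))
        * (Real.exp (-|x ℓ - μa ℓ| / σ ℓ * t) * Real.exp (-|x ℓ - μb ℓ| / σ ℓ * (1 - t))) := by
    ring
  rw [this, ← Real.rpow_add hc, show t + (1 - t) = (1:ℝ) by ring, Real.rpow_one,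
    ← Real.exp_add]
  unfold glap
  congr 1
  field_simp
  ring

lemma int_prod (hσ : ∀ ℓ, 0 < σ ℓ) (fa fb : (Fin d → ℝ) → ℝ)
    (hfa : ∀ x, fa x = ∏ ℓ, 1 / (2 * σ ℓ) * Real.exp (-|x ℓ - μa ℓ| / σ ℓ))
    (hfb : ∀ x, fb x = ∏ ℓ, 1 / (2 * σ ℓ) * Real.exp (-|x ℓ - μb ℓ| / σ ℓ))
    (t : ℝ) :
    (∫ x, fa x ^ t * fb x ^ (1 - t))
      = ∏ ℓ, (1 / (2 * σ ℓ) * ∫ y, glap (μa ℓ) (μb ℓ) (σ ℓ) t y) := by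
  rw [show (fun x : Fin d → ℝ => fa x ^ t * fb x ^ (1 - t))
      = fun x => ∏ ℓ, (1 / (2 * σ ℓ) * glap (μa ℓ) (μb ℓ) (σ ℓ) t (x ℓ)) from
    funext (prod_form μa μb σ hσ fa fb hfa hfb t)]
  rw [volume_pi]
  rw [MeasureTheory.integral_fintype_prod_eq_prod (𝕜 := ℝ)
    (f := fun ℓ y => 1 / (2 * σ ℓ) * glap (μa ℓ) (μb ℓ) (σ ℓ) t y)]
  exact Finset.prod_congr rfl fun ℓ _ => integral_const_mul _ _

end Assemble

theorem stmt8 {d : ℕ} (μa μb : Fin d → ℝ) (σ : Fin d → ℝ) (hσ : ∀ ℓ, 0 < σ ℓ)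
    (fa fb : (Fin d → ℝ) → ℝ)
    (hfa : ∀ x, fa x = ∏ ℓ, 1 / (2 * σ ℓ) * Real.exp (-|x ℓ - μa ℓ| / σ ℓ))
    (hfb : ∀ x, fb x = ∏ ℓ, 1 / (2 * σ ℓ) * Real.exp (-|x ℓ - μb ℓ| / σ ℓ)) :
    (⨆ t : Set.Ioo (0:ℝ) 1, - Real.log (∫ x, fa x ^ (t:ℝ) * fb x ^ (1 - (t:ℝ))))
      = 1 / 2 * ∑ ℓ, (|μa ℓ - μb ℓ| / σ ℓ - 2 * Real.log (1 + |μa ℓ - μb ℓ| / (2 * σ ℓ)))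
    ∧ - Real.log (∫ x, fa x ^ ((1:ℝ)/2) * fb x ^ ((1:ℝ)/2))
      = 1 / 2 * ∑ ℓ, (|μa ℓ - μb ℓ| / σ ℓ - 2 * Real.log (1 + |μa ℓ - μb ℓ| / (2 * σ ℓ))) := by
  set RHS := 1 / 2 * ∑ ℓ, (|μa ℓ - μb ℓ| / σ ℓ
      - 2 * Real.log (1 + |μa ℓ - μb ℓ| / (2 * σ ℓ))) with hRHS
  have hfac : ∀ ℓ, 1 / (2 * σ ℓ) * ((|μa ℓ - μb ℓ| + 2 * σ ℓ)
        * Real.exp (-(|μa ℓ - μb ℓ| / (2 * σ ℓ))))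
      = (1 + |μa ℓ - μb ℓ| / (2 * σ ℓ)) * Real.exp (-(|μa ℓ - μb ℓ| / (2 * σ ℓ))) := by
    intro ℓ
    have h := (hσ ℓ).ne'
    field_simp
    ring
  have hWpos : ∀ ℓ, (0:ℝ) < (1 + |μa ℓ - μb ℓ| / (2 * σ ℓ))
        * Real.exp (-(|μa ℓ - μb ℓ| / (2 * σ ℓ))) := by
    intro ℓ
    have h1 : (0:ℝ) < 1 + |μa ℓ - μb ℓ| / (2 * σ ℓ) := by
      have := abs_nonneg (μa ℓ - μb ℓ)
      have := hσ ℓ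
      positivity
    exact mul_pos h1 (Real.exp_pos _)
  have hIhalf : (∫ x, fa x ^ ((1:ℝ)/2) * fb x ^ (1 - (1:ℝ)/2))
      = ∏ ℓ, ((1 + |μa ℓ - μb ℓ| / (2 * σ ℓ))
        * Real.exp (-(|μa ℓ - μb ℓ| / (2 * σ ℓ)))) := by
    rw [int_prod μa μb σ hσ fa fb hfa hfb ((1:ℝ)/2)]
    refine Finset.prod_congr rfl fun ℓ _ => ?_
    rw [glap_half_val (μa ℓ) (μb ℓ) (hσ ℓ), hfac ℓ]
  have hlogval : - Real.log (∏ ℓ, ((1 + |μa ℓ - μb ℓ| / (2 * σ ℓ))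
        * Real.exp (-(|μa ℓ - μb ℓ| / (2 * σ ℓ))))) = RHS := by
    rw [Real.log_prod (fun ℓ _ => (hWpos ℓ).ne')]
    have hterm : ∀ ℓ ∈ Finset.univ, Real.log ((1 + |μa ℓ - μb ℓ| / (2 * σ ℓ))
          * Real.exp (-(|μa ℓ - μb ℓ| / (2 * σ ℓ))))
        = Real.log (1 + |μa ℓ - μb ℓ| / (2 * σ ℓ)) + -(|μa ℓ - μb ℓ| / (2 * σ ℓ)) := by
      intro ℓ _
      have h1 : (0:ℝ) < 1 + |μa ℓ - μb ℓ| / (2 * σ ℓ) := by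
        have := abs_nonneg (μa ℓ - μb ℓ)
        have := hσ ℓ
        positivity
      rw [Real.log_mul h1.ne' (Real.exp_ne_zero _), Real.log_exp]
    rw [Finset.sum_congr rfl hterm, hRHS, Finset.mul_sum, ← Finset.sum_neg_distrib]
    refine Finset.sum_congr rfl fun ℓ _ => ?_
    have h := (hσ ℓ).ne'
    field_simp
    ring
  have conj2 : - Real.log (∫ x, fa x ^ ((1:ℝ)/2) * fb x ^ ((1:ℝ)/2)) = RHS := by
    rw [show (∫ x, fa x ^ ((1:ℝ)/2) * fb x ^ ((1:ℝ)/2))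
        = ∫ x, fa x ^ ((1:ℝ)/2) * fb x ^ (1 - (1:ℝ)/2) by norm_num, hIhalf, hlogval]
  have hup : ∀ t : Set.Ioo (0:ℝ) 1,
      - Real.log (∫ x, fa x ^ (t:ℝ) * fb x ^ (1 - (t:ℝ))) ≤ RHS := by
    intro t
    obtain ⟨ht0, ht1⟩ := t.2
    have hle : (∫ x, fa x ^ ((1:ℝ)/2) * fb x ^ (1 - (1:ℝ)/2))
        ≤ ∫ x, fa x ^ (t:ℝ) * fb x ^ (1 - (t:ℝ)) := by
      rw [int_prod μa μb σ hσ fa fb hfa hfb ((1:ℝ)/2),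
        int_prod μa μb σ hσ fa fb hfa hfb (t:ℝ)]
      refine Finset.prod_le_prod (fun ℓ _ => ?_) (fun ℓ _ => ?_)
      · have h1 : (0:ℝ) ≤ 1 / (2 * σ ℓ) := by
          have := hσ ℓ
          positivity
        refine mul_nonneg h1 (le_of_lt ?_)
        have := glap_half_val (μa ℓ) (μb ℓ) (hσ ℓ)
        rw [this]
        have := abs_nonneg (μa ℓ - μb ℓ)
        have := hσ ℓ
        positivity
      · refine mul_le_mul_of_nonneg_left ?_ (by have := hσ ℓ; positivity)
        exact glap_int_ge (μa ℓ) (μb ℓ) (hσ ℓ) ht0.le ht1.le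
    have hpos : (0:ℝ) < ∫ x, fa x ^ ((1:ℝ)/2) * fb x ^ (1 - (1:ℝ)/2) := by
      rw [hIhalf]
      exact Finset.prod_pos fun ℓ _ => hWpos ℓ
    calc - Real.log (∫ x, fa x ^ (t:ℝ) * fb x ^ (1 - (t:ℝ)))
        ≤ - Real.log (∫ x, fa x ^ ((1:ℝ)/2) * fb x ^ (1 - (1:ℝ)/2)) :=
          neg_le_neg (Real.log_le_log hpos hle)
      _ = RHS := by rw [hIhalf, hlogval]
  haveI : Nonempty (Set.Ioo (0:ℝ) 1) := ⟨⟨1/2, by norm_num⟩⟩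
  refine ⟨le_antisymm (ciSup_le hup) ?_, conj2⟩
  have hbdd : BddAbove (Set.range fun t : Set.Ioo (0:ℝ) 1 =>
      - Real.log (∫ x, fa x ^ (t:ℝ) * fb x ^ (1 - (t:ℝ)))) := by
    refine ⟨RHS, ?_⟩
    rintro v ⟨t, rfl⟩
    exact hup t
  have := le_ciSup hbdd (⟨1/2, by norm_num⟩ : Set.Ioo (0:ℝ) 1)
  refine le_trans (le_of_eq ?_) this
  show RHS = - Real.log (∫ x, fa x ^ ((1:ℝ)/2) * fb x ^ (1 - (1:ℝ)/2))
  rw [hIhalf, hlogval]
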